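/- arXiv:1507.08146 — 11 statements merged into one kernel-verified Lean document; each statement's English description precedes it below -/
import Mathlib

section
/- Let A be a commutative algebra over a field k, let α, β be nonzero scalars in k, and let z be a nonzero element of the Leibniz center Z(A) = {z ∈ A : z·A = A·z = 0}. Then the linear map R : A⊗A → A⊗A defined by R(a⊗b) = α·(b⊗a) + β·(z⊗(a·b)) satisfies the quantum Yang-Baxter equation R¹²R²³R¹² = R²³R¹²R²³ if and only if A is a Leibniz algebra, i.e., (a·b)·c = a·(b·c) + (a·c)·b for all a, b, c ∈ A. -/
open TensorProduct

/-- For a commutative algebra `A` over a field `k`, nonzero scalars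
`α, β`, and a nonzero element `z` of the Leibniz center, the map
`R(a ⊗ b) = α • (b ⊗ a) + β • (z ⊗ (a·b))` satisfies the quantum Yang-Baxter
equation iff `A` is a Leibniz algebra. -/
theorem stmt_0 {k A : Type*} [Field k] [AddCommGroup A] [Module k A]
    (m : A →ₗ[k] A →ₗ[k] A)
    (hcomm : ∀ a b : A, m a b = m b a)
    (α β : k) (hα : α ≠ 0) (hβ : β ≠ 0)
    (z : A) (hz : z ≠ 0) (hzl : ∀ a : A, m z a = 0) (hzr : ∀ a : A, m a z = 0)
    (R : A ⊗[k] A →ₗ[k] A ⊗[k] A)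
    (hR : ∀ a b : A, R (a ⊗ₜ[k] b) = α • (b ⊗ₜ[k] a) + β • (z ⊗ₜ[k] m a b))
    (R12 R23 : (A ⊗[k] A) ⊗[k] A →ₗ[k] (A ⊗[k] A) ⊗[k] A)
    (hR12 : R12 = TensorProduct.map R LinearMap.id)
    (hR23 : R23 = (TensorProduct.assoc k A A A).symm.toLinearMap ∘ₗ
      TensorProduct.map LinearMap.id R ∘ₗ (TensorProduct.assoc k A A A).toLinearMap) :
    R12 ∘ₗ R23 ∘ₗ R12 = R23 ∘ₗ R12 ∘ₗ R23 ↔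
      (∀ a b c : A, m (m a b) c = m a (m b c) + m (m a c) b) := by
  have hR12' : ∀ x y w : A, R12 ((x ⊗ₜ[k] y) ⊗ₜ[k] w)
      = α • ((y ⊗ₜ[k] x) ⊗ₜ[k] w) + β • ((z ⊗ₜ[k] m x y) ⊗ₜ[k] w) := by
    intro x y w
    subst hR12
    simp [hR, add_tmul, smul_tmul']
  have hR23' : ∀ x y w : A, R23 ((x ⊗ₜ[k] y) ⊗ₜ[k] w)
      = α • ((x ⊗ₜ[k] w) ⊗ₜ[k] y) + β • ((x ⊗ₜ[k] z) ⊗ₜ[k] m y w) := by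
    intro x y w
    subst hR23
    simp [hR, tmul_add, tmul_smul]
  have hL : ∀ a b c : A, R12 (R23 (R12 ((a ⊗ₜ[k] b) ⊗ₜ[k] c)))
      = (α*α*α) • ((c ⊗ₜ[k] b) ⊗ₜ[k] a) + (α*α*β) • ((z ⊗ₜ[k] m b c) ⊗ₜ[k] a)
        + (α*α*β) • ((z ⊗ₜ[k] b) ⊗ₜ[k] m a c) + (α*α*β) • ((c ⊗ₜ[k] z) ⊗ₜ[k] m a b)
        + (α*β*β) • ((z ⊗ₜ[k] z) ⊗ₜ[k] m (m a b) c) := by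
    intro a b c
    simp [hR12', hR23', hzl, hzr, smul_smul]
    module
  have hRr : ∀ a b c : A, R23 (R12 (R23 ((a ⊗ₜ[k] b) ⊗ₜ[k] c)))
      = (α*α*α) • ((c ⊗ₜ[k] b) ⊗ₜ[k] a) + (α*α*β) • ((z ⊗ₜ[k] m b c) ⊗ₜ[k] a)
        + (α*α*β) • ((z ⊗ₜ[k] b) ⊗ₜ[k] m a c) + (α*α*β) • ((c ⊗ₜ[k] z) ⊗ₜ[k] m a b)
        + ((α*β*β) • ((z ⊗ₜ[k] z) ⊗ₜ[k] m (m a c) b)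
          + (α*β*β) • ((z ⊗ₜ[k] z) ⊗ₜ[k] m a (m b c))) := by
    intro a b c
    simp [hR12', hR23', hzl, hzr, smul_smul]
    module
  constructor
  · intro h a b c
    have hE := LinearMap.congr_fun h ((a ⊗ₜ[k] b) ⊗ₜ[k] c)
    simp only [LinearMap.comp_apply] at hE
    rw [hL, hRr] at hE
    have h0 : (α*β*β) • ((z ⊗ₜ[k] z) ⊗ₜ[k]
        (m (m a b) c - (m a (m b c) + m (m a c) b))) = 0 := by
      rw [tmul_sub, tmul_add, smul_sub, smul_add]
      have := sub_eq_zero_of_eq hE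
      rw [← this]
      abel
    rw [smul_eq_zero] at h0
    rcases h0 with h0 | h0
    · exact (mul_ne_zero (mul_ne_zero hα hβ) hβ h0).elim
    · -- from (z ⊗ z) ⊗ d = 0 deduce d = 0
      obtain ⟨f, hf⟩ : ∃ f : Module.Dual k A, f z ≠ 0 := by
        by_contra hc
        push_neg at hc
        exact hz ((Module.forall_dual_apply_eq_zero_iff k z).mp hc)
      set d := m (m a b) c - (m a (m b c) + m (m a c) b) with hd
      have h1 : (f z * f z) • d = 0 := by
        have := congrArg ((TensorProduct.lid k A).toLinearMap ∘ₗ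
          TensorProduct.map ((TensorProduct.lid k k).toLinearMap ∘ₗ
            TensorProduct.map f f) LinearMap.id) h0
        simpa [smul_smul] using this
      have h2 : d = 0 := by
        rcases smul_eq_zero.mp h1 with h2 | h2
        · exact absurd h2 (mul_ne_zero hf hf)
        · exact h2
      exact sub_eq_zero.mp h2
  · intro h
    apply TensorProduct.ext_threefold
    intro a b c
    simp only [LinearMap.comp_apply]
    rw [hL, hRr, h a b c, tmul_add, smul_add]
    abel
end

section
/- Let A be a Jacobi-Jordan algebra over a field k, let α, β ∈ k be nonzero and let 0 ≠ z ∈ Z(A). Then the map R(a⊗b) = α·(b⊗a) + β·(z⊗(a·b)) is a solution of the quantum Yang-Baxter equation if and only if char(k) = 2 or 2·(c·(a·b)) = 0 for all a, b, c ∈ A (i.e., A is at most 3-step nilpotent when char(k) ≠ 2). -/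
open TensorProduct

/-- For a Jacobi-Jordan algebra `A` over a field `k`, nonzero scalars
`α, β` and `0 ≠ z` in the Leibniz center, the map
`R(a ⊗ b) = α • (b ⊗ a) + β • (z ⊗ (a·b))` is a solution of the quantum
Yang-Baxter equation iff `char k = 2` or `2 • (c·(a·b)) = 0` for all `a, b, c`. -/
theorem stmt_1 {k A : Type*} [Field k] [AddCommGroup A] [Module k A]
    (m : A →ₗ[k] A →ₗ[k] A)
    (hcomm : ∀ a b : A, m a b = m b a)
    (hjac : ∀ a b c : A, m a (m b c) + m b (m c a) + m c (m a b) = 0)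
    (α β : k) (hα : α ≠ 0) (hβ : β ≠ 0)
    (z : A) (hz : z ≠ 0) (hzl : ∀ a : A, m z a = 0) (hzr : ∀ a : A, m a z = 0)
    (R : A ⊗[k] A →ₗ[k] A ⊗[k] A)
    (hR : ∀ a b : A, R (a ⊗ₜ[k] b) = α • (b ⊗ₜ[k] a) + β • (z ⊗ₜ[k] m a b))
    (R12 R23 : (A ⊗[k] A) ⊗[k] A →ₗ[k] (A ⊗[k] A) ⊗[k] A)
    (hR12 : R12 = TensorProduct.map R LinearMap.id)
    (hR23 : R23 = (TensorProduct.assoc k A A A).symm.toLinearMap ∘ₗ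
      TensorProduct.map LinearMap.id R ∘ₗ (TensorProduct.assoc k A A A).toLinearMap) :
    R12 ∘ₗ R23 ∘ₗ R12 = R23 ∘ₗ R12 ∘ₗ R23 ↔
      (ringChar k = 2 ∨ ∀ a b c : A, (2 : k) • m c (m a b) = 0) := by
  have key : ∀ a b c : A,
      (R12 ∘ₗ R23 ∘ₗ R12) ((a ⊗ₜ[k] b) ⊗ₜ[k] c) - (R23 ∘ₗ R12 ∘ₗ R23) ((a ⊗ₜ[k] b) ⊗ₜ[k] c)
        = (α * β * β) • ((z ⊗ₜ[k] z) ⊗ₜ[k] ((2:k) • m c (m a b))) := by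
    intro a b c
    have h3 : m a (m b c) = - m b (m c a) - m c (m a b) := by
      have h := hjac a b c; rw [add_assoc, add_eq_zero_iff_eq_neg] at h; rw [h]; abel
    simp only [hR12, hR23, LinearMap.comp_apply, LinearEquiv.coe_coe, TensorProduct.map_tmul,
      LinearMap.id_coe, id_eq, TensorProduct.assoc_tmul, TensorProduct.assoc_symm_tmul, hR,
      map_add, map_smul, LinearMap.smul_apply, tmul_add, add_tmul, tmul_smul, smul_tmul',
      smul_add, hzl, hzr, tmul_zero, zero_tmul, smul_zero, add_zero, zero_add, map_zero,
      smul_smul]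
    rw [hcomm (m a b) c, hcomm (m a c) b, hcomm a c, h3]
    simp only [tmul_add, tmul_sub, tmul_neg, tmul_smul, ← smul_tmul', smul_smul, smul_add,
      smul_sub, smul_neg, two_smul]
    module
  constructor
  · intro hQ
    right
    intro a b c
    obtain ⟨g, hg⟩ := (LinearMap.toSpanSingleton k A z).exists_leftInverse_of_injective
      (LinearMap.ker_toSpanSingleton k hz)
    have gz : g z = 1 := by
      have := LinearMap.congr_fun hg 1
      simpa using this
    have h0 : (α * β * β) • ((z ⊗ₜ[k] z) ⊗ₜ[k] ((2:k) • m c (m a b))) = 0 := by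
      rw [← key a b c, hQ, sub_self]
    have hαβ : α * β * β ≠ 0 := by
      exact mul_ne_zero (mul_ne_zero hα hβ) hβ
    have h1 : (z ⊗ₜ[k] z) ⊗ₜ[k] ((2:k) • m c (m a b)) = 0 :=
      by simpa [smul_eq_zero, hαβ] using h0
    set ψ : A ⊗[k] A →ₗ[k] k := TensorProduct.lift (((LinearMap.mul k k).comp g).compl₂ g)
    set φ : (A ⊗[k] A) ⊗[k] A →ₗ[k] A := TensorProduct.lift ((LinearMap.lsmul k A).comp ψ)
    have := congrArg φ h1
    simpa [φ, ψ, gz] using this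
  · intro h
    have H : ∀ a b c : A, (2 : k) • m c (m a b) = 0 := by
      rcases h with hc | h
      · intro a b c
        have h2 : (2:k) = 0 := by
          have := (ringChar.spec k 2).mpr (by rw [hc])
          simpa using this
        rw [h2, zero_smul]
      · exact h
    apply TensorProduct.ext_threefold
    intro a b c
    have := key a b c
    rw [H a b c, tmul_zero, smul_zero] at this
    exact sub_eq_zero.mp this
end

section
/- Let V be a vector space over a field k, f ∈ End(V) with f² = 0, and v₀ ∈ Ker(f). Then the vector space k × V with multiplication (p,x)·(q,y) := (0, pq·v₀ + p·f(y) + q·f(x)) is a Jacobi-Jordan algebra; moreover, for any three elements u, v, w of this algebra, u·(v·w) = 0. -/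
/-- For a vector space `V`, `f ∈ End(V)` with `f² = 0` and
`v₀ ∈ Ker f`, the space `k × V` with multiplication
`(p,x)·(q,y) = (0, pq·v₀ + p·f(y) + q·f(x))` is a Jacobi-Jordan algebra, and
moreover all triple products `u·(v·w)` vanish. -/
theorem stmt_2 {k V : Type*} [Field k] [AddCommGroup V] [Module k V]
    (f : V →ₗ[k] V) (hf : f ∘ₗ f = 0) (v₀ : V) (hv₀ : f v₀ = 0)
    (mul : k × V → k × V → k × V)
    (hmul : ∀ p q : k × V,
      mul p q = (0, (p.1 * q.1) • v₀ + p.1 • f q.2 + q.1 • f p.2)) :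
    (∀ u v : k × V, mul u v = mul v u) ∧
    (∀ u v w : k × V, mul u (mul v w) + mul v (mul w u) + mul w (mul u v) = 0) ∧
    (∀ u v w : k × V, mul u (mul v w) = 0) := by
  have hff : ∀ x : V, f (f x) = 0 := fun x => by simpa using LinearMap.congr_fun hf x
  have triv : ∀ u v w : k × V, mul u (mul v w) = 0 := by
    intro u v w
    rw [hmul v w, hmul]
    simp [hff, hv₀]
  refine ⟨?_, ?_, triv⟩
  · intro u v
    rw [hmul, hmul]
    ext
    · rfl
    · simp [mul_comm]
      abel
  · intro u v w
    simp [triv]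
end

section
/- Every Jacobi-Jordan algebra over a field of characteristic ≠ 2 is a Jordan algebra: if A is commutative and satisfies the Jacobi identity a·(b·c) + b·(c·a) + c·(a·b) = 0, then ((a·a)·b)·a = (a·a)·(b·a) for all a, b ∈ A. -/
/-- Every Jacobi-Jordan algebra over a field of characteristic ≠ 2
is a Jordan algebra: `((a·a)·b)·a = (a·a)·(b·a)`. -/
theorem stmt_3 {k A : Type*} [Field k] [AddCommGroup A] [Module k A]
    (h2 : (2 : k) ≠ 0)
    (m : A →ₗ[k] A →ₗ[k] A)
    (hcomm : ∀ a b : A, m a b = m b a)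
    (hjac : ∀ a b c : A, m a (m b c) + m b (m c a) + m c (m a b) = 0) :
    ∀ a b : A, m (m (m a a) b) a = m (m a a) (m b a) := by
  have key : ∀ a b : A, m a (m a b) = -((2:k)⁻¹ • m (m a a) b) := by
    intro a b
    have h := hjac a a b
    rw [hcomm b a, hcomm b (m a a)] at h
    have h2s : (2:k) • m a (m a b) = -(m (m a a) b) := by
      rw [two_smul, eq_neg_iff_add_eq_zero]
      exact h
    calc m a (m a b) = (2:k)⁻¹ • ((2:k) • m a (m a b)) := (inv_smul_smul₀ h2 _).symm
      _ = -((2:k)⁻¹ • m (m a a) b) := by rw [h2s, smul_neg]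
  intro a b
  have e1 : m a (m a (m a b)) = -((2:k)⁻¹ • m a (m (m a a) b)) := by
    rw [key a b]; simp
  have e2 : m a (m a (m a b)) = -((2:k)⁻¹ • m (m a a) (m a b)) := key a (m a b)
  have e3 : m a (m (m a a) b) = m (m a a) (m a b) := by
    have := e1.symm.trans e2
    exact smul_right_injective A (inv_ne_zero h2) (neg_inj.mp this)
  rw [hcomm (m (m a a) b) a, hcomm b a]
  exact e3
end

section
/- The commutative Heisenberg Jacobi-Jordan algebra 𝔥(2n+1, k), with basis {e₁,…,eₙ, f₁,…,fₙ, z} and multiplication eᵢ·fᵢ = fᵢ·eᵢ = z (all other products of basis elements zero), is not Frobenius: every invariant bilinear form B on 𝔥(2n+1, k) satisfies B(z, c) = 0 for all c, hence is degenerate. -/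
/-- The commutative Heisenberg Jacobi-Jordan algebra `𝔥(2n+1,k)`
(realized on `(Fin n → k) × (Fin n → k) × k`, with `eᵢ·fᵢ = z` and all other
basis products zero) is not Frobenius: every invariant bilinear form `B`
satisfies `B(z, c) = 0` for all `c`, hence is degenerate. -/
theorem stmt_8 {k : Type*} [Field k] {n : ℕ} (hn : 0 < n)
    (mul : ((Fin n → k) × (Fin n → k) × k) → ((Fin n → k) × (Fin n → k) × k) →
      ((Fin n → k) × (Fin n → k) × k))
    (hmul : ∀ p q : (Fin n → k) × (Fin n → k) × k,
      mul p q = (0, 0, ∑ i, (p.1 i * q.2.1 i + q.1 i * p.2.1 i)))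
    (B : ((Fin n → k) × (Fin n → k) × k) →ₗ[k]
      ((Fin n → k) × (Fin n → k) × k) →ₗ[k] k)
    (hinv : ∀ a b c : (Fin n → k) × (Fin n → k) × k,
      B (mul a b) c = B a (mul b c)) :
    (∀ c : (Fin n → k) × (Fin n → k) × k, B ((0, 0, 1)) c = 0) ∧
    ∃ a : (Fin n → k) × (Fin n → k) × k, a ≠ 0 ∧ ∀ b, B a b = 0 := by
  classical
  set j : Fin n := ⟨0, hn⟩
  set e : (Fin n → k) × (Fin n → k) × k := (Pi.single j 1, 0, 0) with he
  set f : (Fin n → k) × (Fin n → k) × k := (0, Pi.single j 1, 0) with hf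
  have key : ∀ c : (Fin n → k) × (Fin n → k) × k, B ((0, 0, 1)) c = 0 := by
    intro c
    have hz : ((0, 0, 1) : (Fin n → k) × (Fin n → k) × k) = mul e f := by
      rw [hmul]
      simp [he, hf, Pi.single_apply]
    have hfc : mul f c = (0, 0, c.1 j) := by
      rw [hmul]
      simp [hf, Pi.single_apply, mul_comm]
    have hsc : ((0, 0, c.1 j) : (Fin n → k) × (Fin n → k) × k)
        = mul (c.1 j • e) f := by
      rw [hmul]
      simp [he, hf, Pi.single_apply]
    have hee : mul e (c.1 j • e) = 0 := by
      rw [hmul]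
      simp [he]
    calc B ((0, 0, 1)) c = B (mul e f) c := by rw [hz]
      _ = B e (mul f c) := hinv _ _ _
      _ = B e (mul (c.1 j • e) f) := by rw [hfc, ← hsc]
      _ = B (mul e (c.1 j • e)) f := (hinv _ _ _).symm
      _ = 0 := by rw [hee]; simp
  refine ⟨key, ⟨(0, 0, 1), ?_, key⟩⟩
  simp [Prod.ext_iff]
end

section
/- Let A be a 2-dimensional algebra over k with basis {e₁, e₂} and multiplication determined by e₁·e₁ = e₂ (all other products of basis elements zero, multiplication commutative). Then A is a Jacobi-Jordan algebra and the symmetric bilinear form B with B(e₁,e₂) = B(e₂,e₁) = B(e₁,e₁) = 1, B(e₂,e₂) = 0 is nondegenerate and invariant; hence A is a Frobenius Jacobi-Jordan algebra. -/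
/-- The 2-dimensional algebra on `k × k` with basis `e₁ = (1,0)`,
`e₂ = (0,1)` and multiplication determined by `e₁·e₁ = e₂` (so
`(a,b)·(c,d) = (0, a·c)`) is a Jacobi-Jordan algebra, and the symmetric
bilinear form with `B(e₁,e₂) = B(e₂,e₁) = B(e₁,e₁) = 1`, `B(e₂,e₂) = 0`
(so `B((a,b),(c,d)) = a*c + a*d + b*c`) is nondegenerate and invariant;
hence this algebra is Frobenius. -/
theorem stmt_9 {k : Type*} [Field k]
    (mul : k × k → k × k → k × k)
    (hmul : ∀ p q : k × k, mul p q = (0, p.1 * q.1))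
    (B : k × k → k × k → k)
    (hB : ∀ p q : k × k, B p q = p.1 * q.1 + p.1 * q.2 + p.2 * q.1) :
    (∀ u v : k × k, mul u v = mul v u) ∧
    (∀ u v w : k × k, mul u (mul v w) + mul v (mul w u) + mul w (mul u v) = 0) ∧
    (B (1, 0) (0, 1) = 1 ∧ B (0, 1) (1, 0) = 1 ∧ B (1, 0) (1, 0) = 1 ∧
      B (0, 1) (0, 1) = 0) ∧
    (∀ u : k × k, (∀ v : k × k, B u v = 0) → u = 0) ∧
    (∀ u v w : k × k, B (mul u v) w = B u (mul v w)) := by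
  refine ⟨?_, ?_, ?_, ?_, ?_⟩
  · intro u v; simp [hmul, mul_comm]
  · intro u v w; simp [hmul, Prod.ext_iff]
  · simp [hB]
  · rintro ⟨a, b⟩ h
    have h1 := h (1, 0)
    have h2 := h (0, 1)
    simp [hB] at h1 h2
    have ha : a = 0 := by linear_combination h2
    have hb : b = 0 := by linear_combination h1 - h2
    simp [ha, hb, Prod.ext_iff]
  · intro u v w; simp [hB, hmul]; ring
end

section
/- Let A be a Jacobi-Jordan algebra, V a vector space, and (▷, ϑ, ·_V) a triple of bilinear maps ▷ : A × V → V, ϑ : A × A → V, ·_V : V × V → V. Then A × V with multiplication (a,x)•(b,y) := (a·b, ϑ(a,b) + a▷y + b▷x + x·_V y) is a Jacobi-Jordan algebra if and only if: (J1) (V, ·_V) is a Jacobi-Jordan algebra and ϑ is symmetric; (J2) (a·b)▷x + a▷(b▷x) + b▷(a▷x) + x ·_V ϑ(a,b) = 0; (J3) a▷(x ·_V y) + x ·_V (a▷y) + y ·_V (a▷x) = 0; (J4) the cyclic sum over (a,b,c) of ϑ(a, b·c) + a▷ϑ(b,c) vanishes; for all a, b, c ∈ A, x, y ∈ V. -/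
/-- The crossed-product multiplication
`(a,x)•(b,y) = (a·b, ϑ(a,b) + a▷y + b▷x + x·_V y)` on `A × V` gives a
Jacobi-Jordan algebra iff the axioms (J1)-(J4) hold. -/
theorem stmt_10 {k A V : Type*} [Field k] [AddCommGroup A] [Module k A]
    [AddCommGroup V] [Module k V]
    (m : A →ₗ[k] A →ₗ[k] A)
    (hcomm : ∀ a b : A, m a b = m b a)
    (hjac : ∀ a b c : A, m a (m b c) + m b (m c a) + m c (m a b) = 0)
    (act : A →ₗ[k] V →ₗ[k] V) (θ : A →ₗ[k] A →ₗ[k] V) (mv : V →ₗ[k] V →ₗ[k] V)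
    (mul : A × V → A × V → A × V)
    (hmul : ∀ p q : A × V,
      mul p q = (m p.1 q.1, θ p.1 q.1 + act p.1 q.2 + act q.1 p.2 + mv p.2 q.2)) :
    ((∀ p q : A × V, mul p q = mul q p) ∧
     (∀ p q r : A × V, mul p (mul q r) + mul q (mul r p) + mul r (mul p q) = 0)) ↔
    (((∀ x y : V, mv x y = mv y x) ∧
      (∀ x y z : V, mv x (mv y z) + mv y (mv z x) + mv z (mv x y) = 0) ∧
      (∀ a b : A, θ a b = θ b a)) ∧
     (∀ (a b : A) (x : V),
        act (m a b) x + act a (act b x) + act b (act a x) + mv x (θ a b) = 0) ∧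
     (∀ (a : A) (x y : V),
        act a (mv x y) + mv x (act a y) + mv y (act a x) = 0) ∧
     (∀ a b c : A,
        θ a (m b c) + θ b (m c a) + θ c (m a b) +
        act a (θ b c) + act b (θ c a) + act c (θ a b) = 0)) := by
  constructor
  · rintro ⟨hc, hj⟩
    refine ⟨⟨?_, ?_, ?_⟩, ?_, ?_, ?_⟩
    · intro x y
      have := hc (0, x) (0, y)
      rw [hmul, hmul] at this
      simpa [Prod.ext_iff] using this
    · intro x y z
      have := hj (0, x) (0, y) (0, z)
      rw [hmul, hmul, hmul, hmul, hmul, hmul] at this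
      simpa [Prod.ext_iff] using this
    · intro a b
      have := hc (a, 0) (b, 0)
      rw [hmul, hmul] at this
      have h := congrArg Prod.snd this
      simpa using h
    · intro a b x
      have := hj (a, 0) (b, 0) (0, x)
      rw [hmul, hmul, hmul, hmul, hmul, hmul] at this
      have h := congrArg Prod.snd this
      simp only [map_zero, LinearMap.zero_apply, add_zero, zero_add,
        Prod.fst_add, Prod.snd_add, Prod.fst_zero, Prod.snd_zero] at h
      linear_combination (norm := abel) h
    · intro a x y
      have := hj ((a : A), (0 : V)) (0, x) (0, y)
      rw [hmul, hmul, hmul, hmul, hmul, hmul] at this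
      have h := congrArg Prod.snd this
      simp only [map_zero, LinearMap.zero_apply, add_zero, zero_add,
        Prod.fst_add, Prod.snd_add, Prod.fst_zero, Prod.snd_zero] at h
      linear_combination (norm := abel) h
    · intro a b c
      have := hj ((a : A), (0 : V)) (b, 0) (c, 0)
      rw [hmul, hmul, hmul, hmul, hmul, hmul] at this
      have h := congrArg Prod.snd this
      simp only [map_zero, LinearMap.zero_apply, add_zero, zero_add,
        Prod.fst_add, Prod.snd_add, Prod.fst_zero, Prod.snd_zero] at h
      linear_combination (norm := abel) h
  · rintro ⟨⟨hmvs, hmvj, hθs⟩, hJ2, hJ3, hJ4⟩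
    constructor
    · intro p q
      rw [hmul, hmul]
      refine Prod.ext (hcomm _ _) ?_
      rw [hθs p.1 q.1, hmvs p.2 q.2]
      abel
    · intro p q r
      rw [hmul, hmul, hmul, hmul, hmul, hmul]
      refine Prod.ext ?_ ?_
      · simpa using hjac p.1 q.1 r.1
      · simp only [map_add, Prod.fst_add, Prod.snd_add, Prod.fst_zero, Prod.snd_zero]
        have e1 := hJ4 p.1 q.1 r.1
        have e2 := hJ2 q.1 r.1 p.2
        have e3 := hJ2 r.1 p.1 q.2
        have e4 := hJ2 p.1 q.1 r.2
        have e5 := hJ3 p.1 q.2 r.2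
        have e6 := hJ3 q.1 r.2 p.2
        have e7 := hJ3 r.1 p.2 q.2
        have e8 := hmvj p.2 q.2 r.2
        linear_combination (norm := abel) e1 + e2 + e3 + e4 + e5 + e6 + e7 + e8
end

section
/- Let π : E → A be a surjective linear map from a vector space E onto a Jacobi-Jordan algebra A with kernel V, and suppose E carries a Jacobi-Jordan algebra structure making π an algebra homomorphism. Then there exists a crossed system (▷, ϑ, ·_V) of A by V and an isomorphism of Jacobi-Jordan algebras φ : A # V → E with φ(0,x) = x for x ∈ V and π∘φ = pr_A. -/
/-- If `π : E → A` is a surjective linear map onto a Jacobi-Jordan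
algebra `A`, where `E` carries a Jacobi-Jordan algebra structure making `π` an
algebra map, then there is a crossed system `(▷, ϑ, ·_V)` of `A` by
`V = Ker π` and an isomorphism of Jacobi-Jordan algebras `φ : A # V ≅ E` with
`φ(0,x) = x` for `x ∈ V` and `π ∘ φ = pr_A`. -/
theorem stmt_11 {k A E : Type*} [Field k] [AddCommGroup A] [Module k A]
    [AddCommGroup E] [Module k E]
    (mA : A →ₗ[k] A →ₗ[k] A)
    (hAc : ∀ a b : A, mA a b = mA b a)
    (hAj : ∀ a b c : A, mA a (mA b c) + mA b (mA c a) + mA c (mA a b) = 0)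
    (mE : E →ₗ[k] E →ₗ[k] E)
    (hEc : ∀ u v : E, mE u v = mE v u)
    (hEj : ∀ u v w : E, mE u (mE v w) + mE v (mE w u) + mE w (mE u v) = 0)
    (π : E →ₗ[k] A) (hsurj : Function.Surjective π)
    (hπ : ∀ u v : E, π (mE u v) = mA (π u) (π v)) :
    ∃ (act : A →ₗ[k] ↥(LinearMap.ker π) →ₗ[k] ↥(LinearMap.ker π))
      (θ : A →ₗ[k] A →ₗ[k] ↥(LinearMap.ker π))
      (mv : ↥(LinearMap.ker π) →ₗ[k] ↥(LinearMap.ker π) →ₗ[k] ↥(LinearMap.ker π))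
      (mul : A × ↥(LinearMap.ker π) → A × ↥(LinearMap.ker π) → A × ↥(LinearMap.ker π))
      (φ : (A × ↥(LinearMap.ker π)) ≃ₗ[k] E),
      (∀ p q : A × ↥(LinearMap.ker π),
        mul p q = (mA p.1 q.1, θ p.1 q.1 + act p.1 q.2 + act q.1 p.2 + mv p.2 q.2)) ∧
      -- the crossed product is a Jacobi-Jordan algebra, i.e. (▷, ϑ, ·_V) is a crossed system
      (∀ p q : A × ↥(LinearMap.ker π), mul p q = mul q p) ∧
      (∀ p q r : A × ↥(LinearMap.ker π),
        mul p (mul q r) + mul q (mul r p) + mul r (mul p q) = 0) ∧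
      -- φ is an algebra isomorphism
      (∀ p q : A × ↥(LinearMap.ker π), φ (mul p q) = mE (φ p) (φ q)) ∧
      -- φ stabilizes V and co-stabilizes A
      (∀ x : ↥(LinearMap.ker π), φ (0, x) = (x : E)) ∧
      (∀ p : A × ↥(LinearMap.ker π), π (φ p) = p.1) := by
  obtain ⟨s, hs⟩ := π.exists_rightInverse_of_surjective (LinearMap.range_eq_top.2 hsurj)
  have hsa : ∀ a, π (s a) = a := fun a => by
    simpa using LinearMap.congr_fun hs a
  have hker : ∀ u : E, ((LinearMap.id : E →ₗ[k] E) - s ∘ₗ π) u ∈ LinearMap.ker π := by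
    intro u; simp [LinearMap.mem_ker, hsa]
  let P : E →ₗ[k] ↥(LinearMap.ker π) :=
    LinearMap.codRestrict _ ((LinearMap.id : E →ₗ[k] E) - s ∘ₗ π) hker
  have hPx : ∀ x : ↥(LinearMap.ker π), P (x : E) = x := by
    intro x
    ext
    simp [P, LinearMap.mem_ker.1 x.2]
  have hPs : ∀ a : A, P (s a) = 0 := by
    intro a; ext; simp [P, hsa]
  let f : (A × ↥(LinearMap.ker π)) →ₗ[k] E :=
    s ∘ₗ LinearMap.fst k A _ + (LinearMap.ker π).subtype ∘ₗ LinearMap.snd k A _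
  let g : E →ₗ[k] (A × ↥(LinearMap.ker π)) := LinearMap.prod π P
  have hfg : f ∘ₗ g = LinearMap.id := by
    ext u; simp [f, g, P]
  have hgf : g ∘ₗ f = LinearMap.id := by
    apply LinearMap.prod_ext
    · ext a <;> simp [f, g, hsa, hPs, hPx, LinearMap.mem_ker]
    · ext x <;> simp [f, g, hsa, hPs, hPx]
  let φ : (A × ↥(LinearMap.ker π)) ≃ₗ[k] E := LinearEquiv.ofLinear f g hfg hgf
  have hφ : ∀ p : A × ↥(LinearMap.ker π), φ p = s p.1 + (p.2 : E) := by
    intro p; rfl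
  have hφs : ∀ u : E, φ.symm u = (π u, P u) := by intro u; rfl
  let B : E →ₗ[k] E →ₗ[k] ↥(LinearMap.ker π) := mE.compr₂ P
  let act := (B ∘ₗ s).compl₂ (LinearMap.ker π).subtype
  let θ := (B ∘ₗ s).compl₂ s
  let mv := (B ∘ₗ (LinearMap.ker π).subtype).compl₂ (LinearMap.ker π).subtype
  let mul : (A × ↥(LinearMap.ker π)) → (A × ↥(LinearMap.ker π)) → (A × ↥(LinearMap.ker π)) :=
    fun p q => φ.symm (mE (φ p) (φ q))
  have hπ0 : ∀ (x : ↥(LinearMap.ker π)), π (x : E) = 0 := fun x => LinearMap.mem_ker.1 x.2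
  refine ⟨act, θ, mv, mul, φ, ?_, ?_, ?_, ?_, ?_, ?_⟩
  · rintro ⟨a, x⟩ ⟨b, y⟩
    have hexp : mE (s a + (x : E)) (s b + (y : E)) =
        mE (s a) (s b) + mE (s a) (y : E) + mE (s b) (x : E) + mE (x : E) (y : E) := by
      simp only [map_add, LinearMap.add_apply]
      rw [hEc (x : E) (s b)]
      abel
    show φ.symm _ = _
    rw [hφ, hφ, hφs]
    ext
    · simp [hexp, hπ, hsa, hπ0]
    · show (P _ : E) = _
      rw [hexp]
      simp only [map_add]
      rfl
  · intro p q; show φ.symm _ = φ.symm _; rw [hEc]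
  · intro p q r
    show φ.symm _ + φ.symm _ + φ.symm _ = 0
    rw [← map_add, ← map_add]
    simp only [mul, LinearEquiv.apply_symm_apply]
    rw [hEj]
    exact map_zero _
  · intro p q
    show φ (φ.symm _) = _
    rw [LinearEquiv.apply_symm_apply]
  · intro x; rw [hφ]; simp
  · intro p; rw [hφ]; simp [hsa, hπ0]
end

section
/- Let (▷, ϑ, ·_V) and (▷', ϑ', ·'_V) be two crossed systems of a Jacobi-Jordan algebra A by a vector space V, with crossed products A # V and A #' V. Then a linear map ψ : A × V → A × V of the form ψ(a,x) = (a, r(a) + x) for a linear map r : A → V is an algebra morphism A # V → A #' V if and only if: x ·_V y = x ·'_V y; a ▷ x = a ▷' x + r(a) ·'_V x; and ϑ(a,b) + r(a·b) = ϑ'(a,b) + a ▷' r(b) + b ▷' r(a) + r(a) ·'_V r(b), for all a, b ∈ A, x, y ∈ V. Moreover any such ψ is bijective with inverse given by replacing r by -r. -/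
/-- For two crossed systems `(▷, ϑ, ·_V)` and `(▷', ϑ', ·'_V)` of a
Jacobi-Jordan algebra `A` by `V`, the maps `A # V → A #' V` stabilizing `V` and
co-stabilizing `A` are exactly `ψ_r(a,x) = (a, r(a)+x)` for linear `r : A → V`;
`ψ_r` is an algebra morphism iff (CH1), (CH2), (CH3) hold, and any such `ψ_r`
is bijective with inverse `ψ_{-r}`. -/
theorem stmt_13 {k A V : Type*} [Field k] [AddCommGroup A] [Module k A]
    [AddCommGroup V] [Module k V]
    (m : A →ₗ[k] A →ₗ[k] A)
    (hcomm : ∀ a b : A, m a b = m b a)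
    (hjac : ∀ a b c : A, m a (m b c) + m b (m c a) + m c (m a b) = 0)
    (act : A →ₗ[k] V →ₗ[k] V) (θ : A →ₗ[k] A →ₗ[k] V) (mv : V →ₗ[k] V →ₗ[k] V)
    (act' : A →ₗ[k] V →ₗ[k] V) (θ' : A →ₗ[k] A →ₗ[k] V) (mv' : V →ₗ[k] V →ₗ[k] V)
    (mul mul' : A × V → A × V → A × V)
    (hmul : ∀ p q : A × V,
      mul p q = (m p.1 q.1, θ p.1 q.1 + act p.1 q.2 + act q.1 p.2 + mv p.2 q.2))
    (hmul' : ∀ p q : A × V,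
      mul' p q = (m p.1 q.1, θ' p.1 q.1 + act' p.1 q.2 + act' q.1 p.2 + mv' p.2 q.2))
    -- both are crossed systems: the crossed products are Jacobi-Jordan algebras
    (hc : ∀ p q : A × V, mul p q = mul q p)
    (hj : ∀ p q r : A × V, mul p (mul q r) + mul q (mul r p) + mul r (mul p q) = 0)
    (hc' : ∀ p q : A × V, mul' p q = mul' q p)
    (hj' : ∀ p q r : A × V, mul' p (mul' q r) + mul' q (mul' r p) + mul' r (mul' p q) = 0) :
    -- linear maps stabilizing V and co-stabilizing A are exactly the ψ_r
    (∀ ψ₀ : A × V →ₗ[k] A × V,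
      ((∀ x : V, ψ₀ (0, x) = (0, x)) ∧ (∀ p : A × V, (ψ₀ p).1 = p.1)) ↔
        ∃ r₀ : A →ₗ[k] V, ∀ p : A × V, ψ₀ p = (p.1, r₀ p.1 + p.2)) ∧
    ∀ r : A →ₗ[k] V,
      -- ψ_r is an algebra morphism iff (CH1)-(CH3)
      ((∀ p q : A × V,
          (fun p : A × V => ((p.1 : A), r p.1 + p.2)) (mul p q) =
            mul' ((p.1, r p.1 + p.2)) ((q.1, r q.1 + q.2))) ↔
        ((∀ x y : V, mv x y = mv' x y) ∧
         (∀ (a : A) (x : V), act a x = act' a x + mv' (r a) x) ∧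
         (∀ a b : A, θ a b + r (m a b) =
            θ' a b + act' a (r b) + act' b (r a) + mv' (r a) (r b)))) ∧
      -- ψ_r is bijective with inverse ψ_{-r}
      Function.Bijective (fun p : A × V => ((p.1 : A), r p.1 + p.2)) ∧
      (∀ p : A × V,
        (fun p : A × V => ((p.1 : A), -r p.1 + p.2))
          ((fun p : A × V => ((p.1 : A), r p.1 + p.2)) p) = p) ∧
      (∀ p : A × V,
        (fun p : A × V => ((p.1 : A), r p.1 + p.2))
          ((fun p : A × V => ((p.1 : A), -r p.1 + p.2)) p) = p) := by

  constructor
  · intro ψ₀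
    constructor
    · rintro ⟨hV, hA⟩
      refine ⟨(LinearMap.snd k A V).comp (ψ₀.comp (LinearMap.inl k A V)), fun p => ?_⟩
      have : ψ₀ p = ψ₀ (p.1, 0) + ψ₀ (0, p.2) := by
        rw [← map_add]; simp
      rw [this, hV p.2]
      ext
      · simpa using hA (p.1, (0 : V))
      · simp
    · rintro ⟨r₀, hr⟩
      constructor
      · intro x; rw [hr]; simp
      · intro p; rw [hr]
  · intro r
    have hmvcomm : ∀ x y : V, mv' x y = mv' y x := by
      intro x y
      have := hc' (0, x) (0, y)
      rw [hmul', hmul'] at this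
      simpa using congrArg Prod.snd this
    refine ⟨?_, ?_, ?_, ?_⟩
    · constructor
      · intro h
        refine ⟨?_, ?_, ?_⟩
        · intro x y
          have := h (0, x) (0, y)
          rw [hmul, hmul'] at this
          simpa using congrArg Prod.snd this
        · intro a x
          have := h (a, 0) (0, x)
          rw [hmul, hmul'] at this
          have := congrArg Prod.snd this
          simpa using this
        · intro a b
          have := h (a, 0) (b, 0)
          rw [hmul, hmul'] at this
          have := congrArg Prod.snd this
          simp only [map_zero, LinearMap.zero_apply, add_zero, zero_add] at this
          rw [add_comm ((θ a) b)]; exact this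
      · rintro ⟨h1, h2, h3⟩ p q
        rw [hmul, hmul']
        ext
        · rfl
        · simp only
          rw [h1, h2 p.1 q.2, h2 q.1 p.2]
          simp only [map_add, LinearMap.add_apply]
          rw [hmvcomm (r q.1) p.2]
          linear_combination (norm := abel) h3 p.1 q.1
    · exact Function.bijective_iff_has_inverse.mpr
        ⟨fun p => (p.1, -r p.1 + p.2), fun p => by simp, fun p => by simp⟩
    · intro p; simp
    · intro p; simp
end

section
/- Let A be a Jacobi-Jordan algebra. There is a bijection between crossed systems of A by the one-dimensional space k and pairs (λ, ϑ) with λ : A → k linear and ϑ : A × A → k symmetric bilinear satisfying λ(a·b) = -2λ(a)λ(b) and Σ_cyc ϑ(a, b·c) + Σ_cyc λ(a)ϑ(b,c) = 0 for all a, b, c ∈ A; the corresponding crossed product A_{(λ,ϑ)} = A × k has multiplication (a,x)•(b,y) = (a·b, ϑ(a,b) + λ(a)y + λ(b)x) and is a Jacobi-Jordan algebra. -/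
section

variable {k A : Type*} [Field k] [AddCommGroup A] [Module k A]

/-- The crossed-product multiplication on `A × k` associated to a crossed data
`(▷, ϑ, ·_k)` of `A` by the one-dimensional space `k`. -/
def crossMul (m : A →ₗ[k] A →ₗ[k] A)
    (t : (A →ₗ[k] k →ₗ[k] k) × (A →ₗ[k] A →ₗ[k] k) × (k →ₗ[k] k →ₗ[k] k)) :
    A × k → A × k → A × k := fun p q =>
  (m p.1 q.1, t.2.1 p.1 q.1 + t.1 p.1 q.2 + t.1 q.1 p.2 + t.2.2 p.2 q.2)

/-- A crossed data is a crossed system when the crossed product is a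
Jacobi-Jordan algebra. -/
def IsCrossedSystem (m : A →ₗ[k] A →ₗ[k] A)
    (t : (A →ₗ[k] k →ₗ[k] k) × (A →ₗ[k] A →ₗ[k] k) × (k →ₗ[k] k →ₗ[k] k)) : Prop :=
  (∀ p q : A × k, crossMul m t p q = crossMul m t q p) ∧
  (∀ p q r : A × k,
    crossMul m t p (crossMul m t q r) + crossMul m t q (crossMul m t r p) +
      crossMul m t r (crossMul m t p q) = 0)

/-- A co-flag datum of `A`: a linear `λ : A → k` and a symmetric bilinear
`ϑ : A × A → k` with `λ(a·b) = -2λ(a)λ(b)` and the cyclic cocycle condition. -/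
def IsCoflagDatum (m : A →ₗ[k] A →ₗ[k] A)
    (p : (A →ₗ[k] k) × (A →ₗ[k] A →ₗ[k] k)) : Prop :=
  (∀ a b : A, p.2 a b = p.2 b a) ∧
  (∀ a b : A, p.1 (m a b) = -(2 * (p.1 a * p.1 b))) ∧
  (∀ a b c : A,
    (p.2 a (m b c) + p.2 b (m c a) + p.2 c (m a b)) +
      (p.1 a * p.2 b c + p.1 b * p.2 c a + p.1 c * p.2 a b) = 0)

lemma mu_zero (h3 : (3 : k) ≠ 0) (m : A →ₗ[k] A →ₗ[k] A)
    (t : (A →ₗ[k] k →ₗ[k] k) × (A →ₗ[k] A →ₗ[k] k) × (k →ₗ[k] k →ₗ[k] k))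
    (ht : IsCrossedSystem m t) : t.2.2 = 0 := by
  have hj := congrArg Prod.snd (ht.2 (0, (1:k)) (0, (1:k)) (0, (1:k)))
  simp [crossMul] at hj
  have hc : (t.2.2 1) ((t.2.2 1) 1) = t.2.2 1 1 * t.2.2 1 1 := by
    conv_lhs => rw [show ((t.2.2 1) 1 : k) = (t.2.2 1 1) • (1:k) from by rw [smul_eq_mul, mul_one]]
    rw [map_smul, smul_eq_mul]
  rw [hc] at hj
  have h0 : t.2.2 1 1 = 0 := by
    have h33 : (3:k) * (t.2.2 1 1 * t.2.2 1 1) = 0 := by linear_combination hj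
    rcases mul_eq_zero.1 h33 with h | h
    · exact absurd h h3
    · exact mul_self_eq_zero.1 h
  refine LinearMap.ext fun x => LinearMap.ext fun y => ?_
  have hx : t.2.2 (x • (1:k)) (y • (1:k)) = (x * y) • t.2.2 1 1 := by
    rw [map_smul, map_smul, LinearMap.smul_apply, smul_smul, mul_comm y x]
  simp only [smul_eq_mul, mul_one] at hx
  simp [hx, h0]

lemma apply_one (L : A →ₗ[k] k →ₗ[k] k) (a : A) (x : k) : L a x = x * L a 1 := by
  have h : L a (x • (1:k)) = x • L a 1 := map_smul _ _ _
  simpa [smul_eq_mul] using h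

lemma crossed_to_coflag (h3 : (3 : k) ≠ 0) (m : A →ₗ[k] A →ₗ[k] A)
    (t : (A →ₗ[k] k →ₗ[k] k) × (A →ₗ[k] A →ₗ[k] k) × (k →ₗ[k] k →ₗ[k] k))
    (ht : IsCrossedSystem m t) : IsCoflagDatum m (t.1.flip 1, t.2.1) := by
  have hm := mu_zero h3 m t ht
  refine ⟨fun a b => ?_, fun a b => ?_, fun a b c => ?_⟩
  · have h := congrArg Prod.snd (ht.1 (a,0) (b,0))
    simpa [crossMul] using h
  · have h := congrArg Prod.snd (ht.2 (0,(1:k)) (a,0) (b,0))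
    simp [crossMul, hm] at h
    rw [apply_one t.1 a (t.1 b 1), apply_one t.1 b (t.1 a 1)] at h
    simp only [LinearMap.flip_apply]
    linear_combination h
  · have h := congrArg Prod.snd (ht.2 (a,0) (b,0) (c,0))
    simp [crossMul, hm] at h
    rw [apply_one t.1 a (t.2.1 b c), apply_one t.1 b (t.2.1 c a),
      apply_one t.1 c (t.2.1 a b)] at h
    simp only [LinearMap.flip_apply]
    linear_combination h

lemma coflag_to_crossed (m : A →ₗ[k] A →ₗ[k] A)
    (hcomm : ∀ a b : A, m a b = m b a)
    (hjac : ∀ a b c : A, m a (m b c) + m b (m c a) + m c (m a b) = 0)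
    (p : (A →ₗ[k] k) × (A →ₗ[k] A →ₗ[k] k)) (hp : IsCoflagDatum m p) :
    IsCrossedSystem m ((LinearMap.mul k k) ∘ₗ p.1, p.2, 0) := by
  obtain ⟨hsym, hmul, hcoc⟩ := hp
  constructor
  · intro u v
    rw [Prod.ext_iff]
    constructor
    · simpa [crossMul] using hcomm u.1 v.1
    · simp only [crossMul, LinearMap.coe_comp, Function.comp_apply, LinearMap.mul_apply',
        LinearMap.zero_apply]
      rw [hsym u.1 v.1]
      ring
  · intro u v w
    rw [Prod.ext_iff]
    constructor
    · simpa [crossMul] using hjac u.1 v.1 w.1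
    · simp only [crossMul, LinearMap.coe_comp, Function.comp_apply, LinearMap.mul_apply',
        LinearMap.zero_apply, Prod.snd_add, Prod.snd_zero]
      linear_combination hcoc u.1 v.1 w.1 + u.2 * hmul v.1 w.1 + v.2 * hmul w.1 u.1 +
        w.2 * hmul u.1 v.1

/-- For a Jacobi-Jordan algebra `A` (char `k ≠ 2, 3`), crossed
systems of `A` by `k` are in bijection with co-flag data `(λ, ϑ)` of `A`, and
the corresponding crossed product `A_{(λ,ϑ)}` has multiplication
`(a,x)•(b,y) = (a·b, ϑ(a,b) + λ(a)y + λ(b)x)`. -/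
theorem stmt_14 (h2 : (2 : k) ≠ 0) (h3 : (3 : k) ≠ 0)
    (m : A →ₗ[k] A →ₗ[k] A)
    (hcomm : ∀ a b : A, m a b = m b a)
    (hjac : ∀ a b c : A, m a (m b c) + m b (m c a) + m c (m a b) = 0) :
    ∃ e : {t : (A →ₗ[k] k →ₗ[k] k) × (A →ₗ[k] A →ₗ[k] k) × (k →ₗ[k] k →ₗ[k] k) //
            IsCrossedSystem m t} ≃
          {p : (A →ₗ[k] k) × (A →ₗ[k] A →ₗ[k] k) // IsCoflagDatum m p},
      ∀ t, ∀ p q : A × k,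
        crossMul m t.1 p q =
          (m p.1 q.1, (e t).1.2 p.1 q.1 + (e t).1.1 p.1 * q.2 + (e t).1.1 q.1 * p.2) := by
  refine ⟨{ toFun := fun t => ⟨(t.1.1.flip 1, t.1.2.1), crossed_to_coflag h3 m t.1 t.2⟩,
            invFun := fun p => ⟨((LinearMap.mul k k) ∘ₗ p.1.1, p.1.2, 0),
              coflag_to_crossed m hcomm hjac p.1 p.2⟩,
            left_inv := ?_, right_inv := ?_ }, ?_⟩
  · rintro ⟨t, ht⟩
    have hm := mu_zero h3 m t ht
    apply Subtype.ext
    refine Prod.ext ?_ (Prod.ext rfl hm.symm)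
    refine LinearMap.ext fun a => LinearMap.ext fun x => ?_
    simp only [LinearMap.coe_comp, Function.comp_apply, LinearMap.mul_apply',
      LinearMap.flip_apply]
    rw [apply_one t.1 a x, mul_comm]
  · rintro ⟨p, hp⟩
    apply Subtype.ext
    refine Prod.ext ?_ rfl
    refine LinearMap.ext fun a => ?_
    simp
  · rintro ⟨t, ht⟩ u v
    have hm := mu_zero h3 m t ht
    refine Prod.ext rfl ?_
    simp only [crossMul, hm, Equiv.coe_fn_mk, LinearMap.zero_apply, add_zero,
      LinearMap.flip_apply]
    rw [apply_one t.1 u.1 v.2, apply_one t.1 v.1 u.2]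
    ring

end
end

section
/- Let k have characteristic ≠ 2, 3, A a vector space regarded as an abelian Jacobi-Jordan algebra A₀, and ϑ, ϑ' two nonzero symmetric bilinear forms on A. The Jacobi-Jordan algebras A_ϑ and A_{ϑ'} on A × k with multiplication (a,x)•(b,y) = (0, ϑ(a,b)) and (0, ϑ'(a,b)) respectively are isomorphic if and only if ϑ and ϑ' are homothetic: there exist s₀ ∈ k* and a linear automorphism ψ of A with s₀·ϑ(a,b) = ϑ'(ψ(a), ψ(b)) for all a, b ∈ A. -/
/-- Over a field of characteristic ≠ 2, 3, for nonzero symmetric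
bilinear forms `ϑ, ϑ'` on a vector space `A`, the Jacobi-Jordan algebras `A_ϑ`
and `A_{ϑ'}` on `A × k` (with products `(a,x)•(b,y) = (0, ϑ(a,b))`, resp.
`(0, ϑ'(a,b))`) are isomorphic iff `ϑ` and `ϑ'` are homothetic: there exist
`s₀ ∈ k*` and a linear automorphism `ψ` of `A` with
`s₀·ϑ(a,b) = ϑ'(ψ(a),ψ(b))` for all `a, b`. -/
theorem stmt_18 {k A : Type*} [Field k] [AddCommGroup A] [Module k A]
    (h2 : (2 : k) ≠ 0) (h3 : (3 : k) ≠ 0)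
    (θ θ' : A →ₗ[k] A →ₗ[k] k)
    (hθs : ∀ a b : A, θ a b = θ b a) (hθ's : ∀ a b : A, θ' a b = θ' b a)
    (hθ0 : θ ≠ 0) (hθ'0 : θ' ≠ 0) :
    (∃ φ : (A × k) ≃ₗ[k] A × k,
        ∀ p q : A × k,
          φ ((0 : A), θ p.1 q.1) = ((0 : A), θ' (φ p).1 (φ q).1)) ↔
    (∃ (s₀ : k) (ψ : A ≃ₗ[k] A),
        s₀ ≠ 0 ∧ ∀ a b : A, s₀ * θ a b = θ' (ψ a) (ψ b)) := by
  constructor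
  · rintro ⟨φ, hφ⟩
    obtain ⟨a₀, b₀, hab⟩ : ∃ a b, θ a b ≠ 0 := by
      by_contra h
      push_neg at h
      exact hθ0 (by ext a b; simp [h])
    set v : A := (φ (0, 1)).1 with hv
    set s : k := (φ (0, 1)).2 with hs
    have hφ0t : ∀ t : k, φ (0, t) = (t • v, t • s) := by
      intro t
      have h1 : ((0 : A), t) = t • ((0 : A), (1 : k)) := by simp
      rw [h1, map_smul, Prod.smul_def, hv, hs]
    have hv0 : v = 0 := by
      have h1 := hφ (a₀, (0:k)) (b₀, (0:k))
      have h2 := congrArg Prod.fst h1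
      rw [hφ0t] at h2
      simp only [Prod.fst] at h2
      exact (smul_eq_zero.mp h2).resolve_left hab
    have hs0 : s ≠ 0 := by
      intro h
      have : φ (0, 1) = φ (0, 0) := by
        rw [hφ0t, hφ0t, hv0, h]; simp
      have := φ.injective this
      simpa using congrArg Prod.snd this
    -- the linear map f a = (φ (a,0)).1
    set f : A →ₗ[k] A :=
      (LinearMap.fst k A k) ∘ₗ (φ.toLinearMap ∘ₗ LinearMap.inl k A k) with hfdef
    have hf : ∀ a : A, f a = (φ (a, 0)).1 := fun a => rfl
    have hkey : ∀ a b : A, s * θ a b = θ' (f a) (f b) := by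
      intro a b
      have h1 := hφ (a, (0:k)) (b, (0:k))
      have h2 := congrArg Prod.snd h1
      rw [hφ0t] at h2
      simp only [Prod.snd] at h2
      rw [hf, hf]
      rw [← h2]; ring_nf
    have hg : ∀ (a : A) (x : k), φ (a, x) = ((φ (a,0)).1, (φ (a,0)).2 + x * s) := by
      intro a x
      have h1 : (a, x) = (a, (0:k)) + x • ((0:A), (1:k)) := by simp
      rw [h1, map_add, map_smul]
      ext
      · simp [hv0, ← hv]
      · simp [← hs, smul_eq_mul]
    have hinj : Function.Injective f := by
      intro a b hab'
      have h1 : φ (a, -((φ (a,0)).2) / s + (φ (b,0)).2 / s + 0*1) = φ (b, 0) → False → True := fun _ _ => trivial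
      -- show φ (a - b, x) = 0 for suitable x
      have hx : φ (a - b, -(φ (a-b, 0)).2 / s) = 0 := by
        rw [hg]
        ext
        · have : f (a - b) = 0 := by rw [map_sub, hab', sub_self]
          simpa [hf] using this
        · simp only [Prod.snd]
          field_simp
          simp
      have := φ.injective (hx.trans (map_zero φ).symm)
      have := congrArg Prod.fst this
      simpa [sub_eq_zero] using this
    have hsurj : Function.Surjective f := by
      intro b
      obtain ⟨p, hp⟩ := φ.surjective (b, 0)
      refine ⟨p.1, ?_⟩
      have := congrArg Prod.fst (hg p.1 p.2)
      rw [show (p.1, p.2) = p from rfl, hp] at this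
      simpa [hf] using this.symm
    exact ⟨s, LinearEquiv.ofBijective f ⟨hinj, hsurj⟩, hs0, fun a b => hkey a b⟩
  · rintro ⟨s₀, ψ, hs₀, hψ⟩
    refine ⟨ψ.prodCongr (LinearEquiv.smulOfNeZero k k s₀ hs₀), fun p q => ?_⟩
    have h1 : ∀ (a : A) (x : k),
        (ψ.prodCongr (LinearEquiv.smulOfNeZero k k s₀ hs₀)) (a, x) = (ψ a, s₀ * x) := by
      intro a x; rfl
    rw [h1, h1, h1]
    simp only [map_zero]
    exact Prod.ext rfl (hψ p.1 q.1)
end
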